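/- Suppose a well-ordered language L is a finite union L₁ ∪ ... ∪ Lₘ where each Lᵢ has order type at most ω^γ (γ > 0), each Lᵢ has supremum equal to a common word w, and none of the Lᵢ has a greatest element. Then o(L) = ω^γ provided at least one Lᵢ has order type exactly ω^γ. -/

import Mathlib

open Stream'

variable {α : Type*}

/-- Strict (non-prefix) lexicographic order on finite and ω-words. -/
def sLt [LT α] (u v : Seq α) : Prop :=
  ∃ n a b, (∀ i < n, u.get? i = v.get? i) ∧ u.get? n = some a ∧ v.get? n = some b ∧ a < b

/-- Proper prefix order on finite and ω-words. -/
def pLt (u v : Seq α) : Prop :=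
  u ≠ v ∧ ∀ i a, u.get? i = some a → v.get? i = some a

/-- The lexicographic order `<_ℓ` is the union of `<_s` and `<_p`. -/
def lexLt [LT α] (u v : Seq α) : Prop := sLt u v ∨ pLt u v

def lexLe [LT α] (u v : Seq α) : Prop := lexLt u v ∨ u = v

/-- `s` is the supremum of `S` in `(Σ^{≤ω}, <_ℓ)`. -/
def IsSupW [LT α] (S : Set (Seq α)) (s : Seq α) : Prop :=
  (∀ w ∈ S, lexLe w s) ∧ ∀ t, (∀ w ∈ S, lexLe w t) → lexLe s t

/-- A language is prefix-free: no word is a proper prefix of another. -/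
def PrefixFree (L : Set (List α)) : Prop := ∀ u ∈ L, ∀ v ∈ L, u <+: v → u = v

open Ordinal

/-- `≤` in the lexicographic order on finite words. -/
def listLe [LT α] (u v : List α) : Prop := List.Lex (· < ·) u v ∨ u = v

noncomputable def cnfSum (n : ℕ) (e : Fin n → Ordinal) (c : Fin n → ℕ) : Ordinal :=
  (List.ofFn fun i => omega0 ^ (e i) * (c i)).sum

set_option linter.unusedSectionVars false
universe u
namespace Ordinal

noncomputable def nadd (a b : Ordinal.{u}) : Ordinal.{u} :=
  max (⨆ x : Set.Iio a, Order.succ (nadd x.1 b)) (⨆ x : Set.Iio b, Order.succ (nadd a x.1))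
termination_by (a, b)
decreasing_by all_goals cases x; decreasing_tactic

infixl:65 " ♯ " => nadd

theorem nadd_def (a b : Ordinal.{u}) : a ♯ b =
    max (⨆ x : Set.Iio a, Order.succ (x.1 ♯ b)) (⨆ x : Set.Iio b, Order.succ (a ♯ x.1)) := by
  rw [nadd]

theorem nadd_le_iff {a b c : Ordinal.{u}} :
    a ♯ b ≤ c ↔ (∀ a' < a, a' ♯ b < c) ∧ ∀ b' < b, a ♯ b' < c := by
  rw [nadd_def, max_le_iff, Ordinal.iSup_le_iff, Ordinal.iSup_le_iff]
  simp

theorem lt_nadd_iff {a b c : Ordinal.{u}} :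
    a < b ♯ c ↔ (∃ b' < b, a ≤ b' ♯ c) ∨ ∃ c' < c, a ≤ b ♯ c' := by
  rw [nadd_def, lt_max_iff, Ordinal.lt_iSup_iff, Ordinal.lt_iSup_iff]
  simp

theorem nadd_lt_nadd_right {b c : Ordinal.{u}} (h : b < c) (a : Ordinal.{u}) : b ♯ a < c ♯ a :=
  lt_nadd_iff.2 (Or.inl ⟨b, h, le_rfl⟩)

theorem nadd_lt_nadd_left {b c : Ordinal.{u}} (h : b < c) (a : Ordinal.{u}) : a ♯ b < a ♯ c :=
  lt_nadd_iff.2 (Or.inr ⟨b, h, le_rfl⟩)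

theorem nadd_le_nadd_right {b c : Ordinal.{u}} (h : b ≤ c) (a : Ordinal.{u}) : b ♯ a ≤ c ♯ a := by
  rcases h.lt_or_eq with h | rfl
  · exact (nadd_lt_nadd_right h a).le
  · exact le_rfl

theorem nadd_le_nadd_left {b c : Ordinal.{u}} (h : b ≤ c) (a : Ordinal.{u}) : a ♯ b ≤ a ♯ c := by
  rcases h.lt_or_eq with h | rfl
  · exact (nadd_lt_nadd_left h a).le
  · exact le_rfl

theorem nadd_lt_nadd_of_lt_of_le {a b c d : Ordinal.{u}} (h₁ : a < b) (h₂ : c ≤ d) :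
    a ♯ c < b ♯ d :=
  (nadd_lt_nadd_right h₁ c).trans_le (nadd_le_nadd_left h₂ b)

theorem nadd_lt_nadd_of_le_of_lt {a b c d : Ordinal.{u}} (h₁ : a ≤ b) (h₂ : c < d) :
    a ♯ c < b ♯ d :=
  (nadd_le_nadd_right h₁ c).trans_lt (nadd_lt_nadd_left h₂ b)

theorem zero_nadd (b : Ordinal.{u}) : 0 ♯ b = b := by
  induction b using Ordinal.induction with
  | _ b IH =>
    apply le_antisymm
    · rw [nadd_le_iff]
      refine ⟨fun a' ha' => absurd ha' (zero_le (a := a')).not_gt, fun b' hb' => ?_⟩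
      rw [IH b' hb']; exact hb'
    · apply le_of_forall_lt
      intro c hc
      exact lt_nadd_iff.2 (Or.inr ⟨c, hc, (IH c hc).ge⟩)

theorem nadd_zero (a : Ordinal.{u}) : a ♯ 0 = a := by
  induction a using Ordinal.induction with
  | _ a IH =>
    apply le_antisymm
    · rw [nadd_le_iff]
      refine ⟨fun a' ha' => ?_, fun b' hb' => absurd hb' (zero_le (a := b')).not_gt⟩
      rw [IH a' ha']; exact ha'
    · apply le_of_forall_lt
      intro c hc
      exact lt_nadd_iff.2 (Or.inl ⟨c, hc, (IH c hc).ge⟩)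

theorem add_le_nadd (a b : Ordinal.{u}) : a + b ≤ a ♯ b := by
  induction b using Ordinal.induction with
  | _ b IH =>
    apply le_of_forall_lt
    intro c hc
    rcases lt_or_ge c a with h | h
    · calc c < a := h
        _ = a ♯ 0 := (nadd_zero a).symm
        _ ≤ a ♯ b := nadd_le_nadd_left (zero_le (a := b)) a
    · have hce : a + (c - a) = c := Ordinal.add_sub_cancel_of_le h
      have hd : c - a < b := by
        rw [← hce] at hc
        exact (add_lt_add_iff_left _).1 hc
      calc c = a + (c - a) := hce.symm
        _ ≤ a ♯ (c - a) := IH _ hd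
        _ < a ♯ b := nadd_lt_nadd_left hd a

end Ordinal

instance subrelSetWO {β : Type*} (r : β → β → Prop) [IsWellOrder β r] (A : Set β) :
    IsWellOrder (Subtype A) (Subrel r A) :=
  inferInstanceAs (IsWellOrder (Subtype fun x => A x) (Subrel r fun x => A x))

instance subrelSetWO' {β : Type*} (r : β → β → Prop) [IsWellOrder β r] (A : Set β) :
    IsWellOrder (↥A) (Subrel r A) :=
  inferInstanceAs (IsWellOrder (Subtype fun x => A x) (Subrel r fun x => A x))


section AuxLemmas
open Ordinal

lemma nadd_decomp (δ : Ordinal) (hP : ∀ a b, a < omega0 ^ δ → b < omega0 ^ δ → a ♯ b < omega0 ^ δ) :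
    ∀ s : ℕ, ∀ m₁ m₂ : ℕ, m₁ + m₂ = s → ∀ o : Ordinal, ∀ a b : Ordinal,
      a < omega0 ^ δ → b < omega0 ^ δ → a ♯ b = o →
      (omega0 ^ δ * m₁ + a) ♯ (omega0 ^ δ * m₂ + b) = omega0 ^ δ * (m₁ + m₂ : ℕ) + (a ♯ b) := by
  have hδ0 : (omega0 ^ δ : Ordinal) ≠ 0 := (opow_pos δ omega0_pos).ne'
  intro s
  induction s using Nat.strong_induction_on with
  | _ s IHs =>
    intro m₁ m₂ hs o
    induction o using Ordinal.induction with
    | _ o IHo =>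
      intro a b ha hb hab
      subst hab hs
      apply le_antisymm
      · rw [nadd_le_iff]
        constructor
        · intro x hx
          rcases lt_or_ge x (omega0 ^ δ * m₁) with hx1 | hx1
          · have hdiv : x / omega0 ^ δ < (m₁ : Ordinal) := (div_lt hδ0).2 hx1
            obtain ⟨k, hk⟩ := lt_omega0.1 (hdiv.trans (nat_lt_omega0 m₁))
            have hkm : k < m₁ := by rw [hk] at hdiv; exact_mod_cast hdiv
            have hx0 : x % omega0 ^ δ < omega0 ^ δ := mod_lt x hδ0
            have hxeq : omega0 ^ δ * (k : Ordinal) + x % omega0 ^ δ = x := by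
              rw [← hk]; exact div_add_mod x _
            have heq := IHs (k + m₂) (by omega) k m₂ rfl (x % omega0 ^ δ ♯ b)
              (x % omega0 ^ δ) b hx0 hb rfl
            calc x ♯ (omega0 ^ δ * m₂ + b)
                = omega0 ^ δ * ((k + m₂ : ℕ) : Ordinal) + (x % omega0 ^ δ ♯ b) := by
                  rw [hxeq] at heq; exact heq
              _ < omega0 ^ δ * ((k + m₂ : ℕ) : Ordinal) + omega0 ^ δ :=
                  add_lt_add_right (hP _ _ hx0 hb) _
              _ = omega0 ^ δ * (((k + m₂ : ℕ) : Ordinal) + 1) := (mul_add_one _ _).symm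
              _ ≤ omega0 ^ δ * ((m₁ + m₂ : ℕ) : Ordinal) := by
                  apply mul_le_mul_right
                  exact_mod_cast Nat.succ_le_of_lt (by omega)
              _ ≤ omega0 ^ δ * ((m₁ + m₂ : ℕ) : Ordinal) + (a ♯ b) := le_self_add
          · have hxe : omega0 ^ δ * m₁ + (x - omega0 ^ δ * m₁) = x :=
              Ordinal.add_sub_cancel_of_le hx1
            have ha' : x - omega0 ^ δ * m₁ < a := by
              rw [← hxe] at hx
              exact (add_lt_add_iff_left _).1 hx
            have heq := IHo ((x - omega0 ^ δ * m₁) ♯ b) (nadd_lt_nadd_right ha' b)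
              (x - omega0 ^ δ * m₁) b (ha'.trans ha) hb rfl
            rw [← hxe, heq]
            exact add_lt_add_right (nadd_lt_nadd_right ha' b) _
        · intro y hy
          rcases lt_or_ge y (omega0 ^ δ * m₂) with hy1 | hy1
          · have hdiv : y / omega0 ^ δ < (m₂ : Ordinal) := (div_lt hδ0).2 hy1
            obtain ⟨k, hk⟩ := lt_omega0.1 (hdiv.trans (nat_lt_omega0 m₂))
            have hkm : k < m₂ := by rw [hk] at hdiv; exact_mod_cast hdiv
            have hy0 : y % omega0 ^ δ < omega0 ^ δ := mod_lt y hδ0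
            have hyeq : omega0 ^ δ * (k : Ordinal) + y % omega0 ^ δ = y := by
              rw [← hk]; exact div_add_mod y _
            have heq := IHs (m₁ + k) (by omega) m₁ k rfl (a ♯ y % omega0 ^ δ)
              a (y % omega0 ^ δ) ha hy0 rfl
            calc (omega0 ^ δ * m₁ + a) ♯ y
                = omega0 ^ δ * ((m₁ + k : ℕ) : Ordinal) + (a ♯ y % omega0 ^ δ) := by
                  rw [hyeq] at heq; exact heq
              _ < omega0 ^ δ * ((m₁ + k : ℕ) : Ordinal) + omega0 ^ δ :=
                  add_lt_add_right (hP _ _ ha hy0) _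
              _ = omega0 ^ δ * (((m₁ + k : ℕ) : Ordinal) + 1) := (mul_add_one _ _).symm
              _ ≤ omega0 ^ δ * ((m₁ + m₂ : ℕ) : Ordinal) := by
                  apply mul_le_mul_right
                  exact_mod_cast Nat.succ_le_of_lt (by omega)
              _ ≤ omega0 ^ δ * ((m₁ + m₂ : ℕ) : Ordinal) + (a ♯ b) := le_self_add
          · have hye : omega0 ^ δ * m₂ + (y - omega0 ^ δ * m₂) = y :=
              Ordinal.add_sub_cancel_of_le hy1
            have hb' : y - omega0 ^ δ * m₂ < b := by
              rw [← hye] at hy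
              exact (add_lt_add_iff_left _).1 hy
            have heq := IHo (a ♯ (y - omega0 ^ δ * m₂)) (nadd_lt_nadd_left hb' a)
              a (y - omega0 ^ δ * m₂) ha (hb'.trans hb) rfl
            rw [← hye, heq]
            exact add_lt_add_right (nadd_lt_nadd_left hb' a) _
      · apply le_of_forall_lt
        intro z hz
        rcases lt_or_ge z (omega0 ^ δ * ((m₁ + m₂ : ℕ) : Ordinal)) with h1 | h1
        · refine h1.trans_le ?_
          calc omega0 ^ δ * ((m₁ + m₂ : ℕ) : Ordinal)
              = omega0 ^ δ * m₁ + omega0 ^ δ * m₂ := by push_cast; rw [mul_add]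
            _ ≤ (omega0 ^ δ * m₁ + a) + (omega0 ^ δ * m₂ + b) :=
                add_le_add (le_self_add) (le_self_add)
            _ ≤ (omega0 ^ δ * m₁ + a) ♯ (omega0 ^ δ * m₂ + b) := add_le_nadd _ _
        · have hze : omega0 ^ δ * ((m₁ + m₂ : ℕ) : Ordinal)
              + (z - omega0 ^ δ * ((m₁ + m₂ : ℕ) : Ordinal)) = z :=
            Ordinal.add_sub_cancel_of_le h1
          have hc : z - omega0 ^ δ * ((m₁ + m₂ : ℕ) : Ordinal) < a ♯ b := by
            rw [← hze] at hz
            exact (add_lt_add_iff_left _).1 hz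
          rcases lt_nadd_iff.1 hc with ⟨a', ha', hca⟩ | ⟨b', hb', hcb⟩
          · have heq := IHo (a' ♯ b) (nadd_lt_nadd_right ha' b) a' b (ha'.trans ha) hb rfl
            calc z = omega0 ^ δ * ((m₁ + m₂ : ℕ) : Ordinal)
                  + (z - omega0 ^ δ * ((m₁ + m₂ : ℕ) : Ordinal)) := hze.symm
              _ ≤ omega0 ^ δ * ((m₁ + m₂ : ℕ) : Ordinal) + (a' ♯ b) := add_le_add_right hca _
              _ = (omega0 ^ δ * m₁ + a') ♯ (omega0 ^ δ * m₂ + b) := heq.symm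
              _ < (omega0 ^ δ * m₁ + a) ♯ (omega0 ^ δ * m₂ + b) :=
                  nadd_lt_nadd_right (add_lt_add_right ha' _) _
          · have heq := IHo (a ♯ b') (nadd_lt_nadd_left hb' a) a b' ha (hb'.trans hb) rfl
            calc z = omega0 ^ δ * ((m₁ + m₂ : ℕ) : Ordinal)
                  + (z - omega0 ^ δ * ((m₁ + m₂ : ℕ) : Ordinal)) := hze.symm
              _ ≤ omega0 ^ δ * ((m₁ + m₂ : ℕ) : Ordinal) + (a ♯ b') := add_le_add_right hcb _
              _ = (omega0 ^ δ * m₁ + a) ♯ (omega0 ^ δ * m₂ + b') := heq.symm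
              _ < (omega0 ^ δ * m₁ + a) ♯ (omega0 ^ δ * m₂ + b) :=
                  nadd_lt_nadd_left (add_lt_add_right hb' _) _

lemma nadd_lt_omega0_opow' : ∀ (γ : Ordinal) (a b : Ordinal),
    a < omega0 ^ γ → b < omega0 ^ γ → a ♯ b < omega0 ^ γ := by
  intro γ
  induction γ using Ordinal.induction with
  | _ γ IH =>
    intro a b ha hb
    rcases eq_or_ne a 0 with rfl | ha0
    · rwa [zero_nadd]
    rcases eq_or_ne b 0 with rfl | hb0
    · rwa [nadd_zero]
    set δ := max (log omega0 a) (log omega0 b) with hδdef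
    have hδγ : δ < γ := max_lt ((lt_opow_iff_log_lt one_lt_omega0 ha0).1 ha)
      ((lt_opow_iff_log_lt one_lt_omega0 hb0).1 hb)
    have hP := IH δ hδγ
    have hδ0 : (omega0 ^ δ : Ordinal) ≠ 0 := (opow_pos δ omega0_pos).ne'
    have haδ : a < omega0 ^ δ * omega0 := by
      rw [← opow_succ]
      exact (lt_opow_succ_log_self one_lt_omega0 a).trans_le
        (opow_le_opow_right omega0_pos (Order.succ_le_succ (le_max_left _ _)))
    have hbδ : b < omega0 ^ δ * omega0 := by
      rw [← opow_succ]
      exact (lt_opow_succ_log_self one_lt_omega0 b).trans_le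
        (opow_le_opow_right omega0_pos (Order.succ_le_succ (le_max_right _ _)))
    obtain ⟨m₁, hm₁⟩ := lt_omega0.1 ((div_lt hδ0).2 haδ)
    obtain ⟨m₂, hm₂⟩ := lt_omega0.1 ((div_lt hδ0).2 hbδ)
    have ha0' : a % omega0 ^ δ < omega0 ^ δ := mod_lt a hδ0
    have hb0' : b % omega0 ^ δ < omega0 ^ δ := mod_lt b hδ0
    have hae : omega0 ^ δ * (m₁ : Ordinal) + a % omega0 ^ δ = a := by
      rw [← hm₁]; exact div_add_mod a _
    have hbe : omega0 ^ δ * (m₂ : Ordinal) + b % omega0 ^ δ = b := by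
      rw [← hm₂]; exact div_add_mod b _
    have heq := nadd_decomp δ hP (m₁ + m₂) m₁ m₂ rfl _ _ _ ha0' hb0' rfl
    calc a ♯ b = omega0 ^ δ * ((m₁ + m₂ : ℕ) : Ordinal)
          + (a % omega0 ^ δ ♯ b % omega0 ^ δ) := by
          conv_lhs => rw [← hae, ← hbe]
          exact heq
      _ < omega0 ^ δ * ((m₁ + m₂ : ℕ) : Ordinal) + omega0 ^ δ :=
          add_lt_add_right (hP _ _ ha0' hb0') _
      _ = omega0 ^ δ * (((m₁ + m₂ : ℕ) : Ordinal) + 1) := (mul_add_one _ _).symm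
      _ < omega0 ^ δ * omega0 := by
          apply mul_lt_mul_of_pos_left _ (opow_pos δ omega0_pos)
          exact_mod_cast nat_lt_omega0 (m₁ + m₂ + 1)
      _ = omega0 ^ (Order.succ δ) := (opow_succ _ _).symm
      _ ≤ omega0 ^ γ := opow_le_opow_right omega0_pos (Order.succ_le_of_lt hδγ)


lemma type_le_of_typein_lt {β : Type*} {r : β → β → Prop} [IsWellOrder β r] {c : Ordinal}
    (h : ∀ x, typein r x < c) : type r ≤ c := by
  by_contra hc
  push_neg at hc
  obtain ⟨x, hx⟩ := typein_surj r hc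
  exact absurd (hx ▸ h x) (lt_irrefl c)

lemma type_subset_le {β : Type*} (r : β → β → Prop) [IsWellOrder β r] {A B : Set β}
    (h : A ⊆ B) : type (Subrel r A) ≤ type (Subrel r B) :=
  RelEmbedding.ordinal_type_le ⟨⟨Set.inclusion h, Set.inclusion_injective h⟩, Iff.rfl⟩

lemma type_inter_eq_typein {β : Type*} (r : β → β → Prop) [IsWellOrder β r] (S : Set β)
    (x : ↥S) : type (Subrel r {y | y ∈ S ∧ r y ↑x}) = typein (Subrel r S) x := by
  rw [← type_subrel]
  exact RelIso.ordinal_type_eq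
    { toFun := fun z => ⟨⟨z.1, z.2.1⟩, z.2.2⟩
      invFun := fun z => ⟨z.1.1, z.1.2, z.2⟩
      left_inv := fun z => rfl
      right_inv := fun z => rfl
      map_rel_iff' := Iff.rfl }

lemma type_union_le_nadd {β : Type*} (r : β → β → Prop) [IsWellOrder β r] (A B : Set β) :
    type (Subrel r (A ∪ B : Set β)) ≤ type (Subrel r A) ♯ type (Subrel r B) := by
  have key : ∀ o : Ordinal, ∀ A B : Set β, type (Subrel r (A ∪ B : Set β)) = o →
      type (Subrel r (A ∪ B : Set β)) ≤ type (Subrel r A) ♯ type (Subrel r B) := by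
    intro o
    induction o using Ordinal.induction with
    | _ o IH =>
      intro A B ho
      apply type_le_of_typein_lt
      intro (x : ↥(A ∪ B))
      have hset : {y | y ∈ A ∪ B ∧ r y ↑x} =
          {y | y ∈ A ∧ r y ↑x} ∪ {y | y ∈ B ∧ r y ↑x} := by
        ext y
        simp only [Set.mem_setOf_eq, Set.mem_union]
        tauto
      have htyp : type (Subrel r ({y | y ∈ A ∧ r y ↑x} ∪ {y | y ∈ B ∧ r y ↑x} : Set β)) =
          typein (Subrel r (A ∪ B : Set β)) x := by
        rw [← hset, type_inter_eq_typein]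
      have hlt : type (Subrel r ({y | y ∈ A ∧ r y ↑x} ∪ {y | y ∈ B ∧ r y ↑x} : Set β)) < o := by
        rw [htyp, ← ho]
        exact typein_lt_type _ x
      rw [← htyp]
      refine lt_of_le_of_lt (IH _ hlt _ _ rfl) ?_
      rcases x.2 with hx | hx
      · refine nadd_lt_nadd_of_lt_of_le ?_ (type_subset_le r fun y hy => hy.1)
        rw [type_inter_eq_typein r A ⟨↑x, hx⟩]
        exact typein_lt_type _ _
      · refine nadd_lt_nadd_of_le_of_lt (type_subset_le r fun y hy => hy.1) ?_
        rw [type_inter_eq_typein r B ⟨↑x, hx⟩]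
        exact typein_lt_type _ _
  exact key _ A B rfl

lemma type_iUnion_lt {β : Type*} (r : β → β → Prop) [IsWellOrder β r] {c : Ordinal}
    (hc0 : 0 < c) (hc : ∀ a b, a < c → b < c → a ♯ b < c) :
    ∀ (m : ℕ) (S : Fin m → Set β), (∀ i, type (Subrel r (S i)) < c) →
      type (Subrel r (⋃ i, S i)) < c := by
  intro m
  induction m with
  | zero =>
    intro S hS
    rw [Set.iUnion_of_empty S]
    haveI : IsEmpty (Subtype (∅ : Set β)) := ⟨fun x => x.2⟩
    rw [Ordinal.type_eq_zero_of_empty]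
    exact hc0
  | succ n IHn =>
    intro S hS
    have hset : (⋃ i, S i) = S 0 ∪ ⋃ i : Fin n, S i.succ := by
      ext y
      simp [Set.mem_iUnion, Fin.exists_fin_succ]
    rw [hset]
    exact lt_of_le_of_lt (type_union_le_nadd r _ _)
      (hc _ _ (hS 0) (IHn _ fun i => hS i.succ))

variable [LinearOrder α]

variable [LinearOrder α]

lemma lexLt_of_lex : ∀ {u v : List α}, List.Lex (· < ·) u v →
    lexLt (Seq.ofList u) (Seq.ofList v) := by
  intro u v h
  induction h with
  | @nil a l =>
    refine Or.inr ⟨?_, ?_⟩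
    · intro h
      have := congrArg (fun s => Seq.get? s 0) h
      simp [Seq.ofList_get?] at this
    · intro i x hx
      rw [Seq.ofList_get?] at hx
      simp at hx
  | @cons a l₁ l₂ h ih =>
    rcases ih with ⟨n, x, y, hpre, hx, hy, hxy⟩ | ⟨hne, hpre⟩
    · refine Or.inl ⟨n + 1, x, y, ?_, ?_, ?_, hxy⟩
      · intro i hi
        match i with
        | 0 => simp [Seq.ofList_get?]
        | j + 1 =>
          have := hpre j (by omega)
          rw [Seq.ofList_get?, Seq.ofList_get?] at this
          simpa [Seq.ofList_get?] using this
      · rw [Seq.ofList_get?] at hx ⊢; simpa using hx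
      · rw [Seq.ofList_get?] at hy ⊢; simpa using hy
    · refine Or.inr ⟨?_, ?_⟩
      · intro h
        have h2 := Seq.ofList_injective h
        have h3 : l₁ = l₂ := by injection h2
        exact hne (by rw [h3])
      · intro i x hx
        match i with
        | 0 =>
          rw [Seq.ofList_get?] at hx ⊢
          simpa using hx
        | j + 1 =>
          rw [Seq.ofList_get?] at hx ⊢
          simp only [List.getElem?_cons_succ] at hx ⊢
          have := hpre j x
          rw [Seq.ofList_get?, Seq.ofList_get?] at this
          exact this hx
  | @rel a l₁ b l₂ h =>
    exact Or.inl ⟨0, a, b, fun i hi => absurd hi (Nat.not_lt_zero i),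
      by simp [Seq.ofList_get?], by simp [Seq.ofList_get?], h⟩

lemma lexLt_asymm {u v : Seq α} (h1 : lexLt u v) (h2 : lexLt v u) : False := by
  rcases h1 with ⟨n, a, b, hp, ha, hb, hab⟩ | ⟨hne, hpre⟩
  · rcases h2 with ⟨n', a', b', hp', ha', hb', hab'⟩ | ⟨hne', hpre'⟩
    · rcases lt_trichotomy n n' with h | rfl | h
      · have h3 := hp' n h
        rw [hb, ha] at h3
        have := Option.some.inj h3
        subst this
        exact lt_irrefl _ hab
      · rw [ha'] at hb
        rw [hb'] at ha
        obtain rfl := Option.some.inj hb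
        obtain rfl := Option.some.inj ha
        exact lt_asymm hab hab'
      · have h3 := hp n' h
        rw [ha', hb'] at h3
        have := Option.some.inj h3
        subst this
        exact lt_irrefl _ hab'
    · have h3 := hpre' n b hb
      rw [ha] at h3
      have := Option.some.inj h3
      subst this
      exact lt_irrefl _ hab
  · rcases h2 with ⟨n, a, b, hp, ha, hb, hab⟩ | ⟨hne', hpre'⟩
    · have h3 := hpre n b hb
      rw [ha] at h3
      have := Option.some.inj h3
      subst this
      exact lt_irrefl _ hab
    · refine hne (Seq.ext fun n => ?_)
      cases h : u.get? n with
      | none =>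
        cases h' : v.get? n with
        | none => rfl
        | some x =>
          have := hpre' n x h'
          rw [h] at this
          exact absurd this (by simp)
      | some x => rw [hpre n x h]

lemma lexLt_irrefl (u : Seq α) (h : lexLt u u) : False := lexLt_asymm h h

lemma lex_iff_lexLt {u v : List α} :
    List.Lex (· < ·) u v ↔ lexLt (Seq.ofList u) (Seq.ofList v) := by
  constructor
  · exact lexLt_of_lex
  · intro h
    rcases @trichotomous _ (List.Lex (· < ·)) (List.Lex.trichotomous _) u v with h' | rfl | h'
    · exact h'
    · exact (lexLt_irrefl _ h).elim
    · exact (lexLt_asymm h (lexLt_of_lex h')).elim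

lemma listLe_iff {u v : List α} :
    listLe u v ↔ lexLe (Seq.ofList u) (Seq.ofList v) := by
  constructor
  · rintro (h | rfl)
    · exact Or.inl (lexLt_of_lex h)
    · exact Or.inr rfl
  · rintro (h | h)
    · exact Or.inl (lex_iff_lexLt.2 h)
    · exact Or.inr (Seq.ofList_injective h)

lemma lexLe_antisymm {u v : Seq α} (h1 : lexLe u v) (h2 : lexLe v u) : u = v := by
  rcases h1 with h1 | rfl
  · rcases h2 with h2 | rfl
    · exact (lexLt_asymm h1 h2).elim
    · rfl
  · rfl


end AuxLemmas

theorem type_of_union_pow [LinearOrder α] (m : ℕ) (Ls : Fin m → Set (List α))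
    (L : Set (List α)) (hL : L = ⋃ i, Ls i) (γ : Ordinal) (hγ : 0 < γ)
    (hw : IsWellOrder L (Subrel (List.Lex (· < ·)) L))
    (hwi : ∀ i, IsWellOrder (Ls i) (Subrel (List.Lex (· < ·)) (Ls i)))
    (hle : ∀ i, @Ordinal.type _ _ (hwi i) ≤ omega0 ^ γ)
    (w : Seq α) (hsup : ∀ i, IsSupW (Seq.ofList '' Ls i) w)
    (hnomax : ∀ i, ¬ ∃ x ∈ Ls i, ∀ v ∈ Ls i, listLe v x)
    (hone : ∃ i, @Ordinal.type _ _ (hwi i) = omega0 ^ γ) :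
    @Ordinal.type _ _ hw = omega0 ^ γ := by
  letI := hw
  haveI : IsWellOrder (Subtype L) (Subrel (List.Lex (· < ·)) L) := hw
  have hsub : ∀ i, Ls i ⊆ L := fun i => by rw [hL]; exact Set.subset_iUnion Ls i
  have exists_gt : ∀ i, ∀ v ∈ L, ∃ u ∈ Ls i, List.Lex (· < ·) v u := by
    intro i v hv
    by_contra hcon
    push_neg at hcon
    have hub : ∀ u ∈ Ls i, listLe u v := by
      intro u hu
      rcases @trichotomous _ (List.Lex (· < ·)) (List.Lex.trichotomous _) u v with h | h | h
      · exact Or.inl h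
      · exact Or.inr h
      · exact absurd h (hcon u hu)
    have hwv : lexLe w (Seq.ofList v) := by
      apply (hsup i).2
      rintro x ⟨u, hu, rfl⟩
      exact listLe_iff.1 (hub u hu)
    obtain ⟨j, hvj⟩ : ∃ j, v ∈ Ls j := by
      rw [hL] at hv; exact Set.mem_iUnion.1 hv
    have hvw : lexLe (Seq.ofList v) w := (hsup j).1 _ ⟨v, hvj, rfl⟩
    have hwe : w = Seq.ofList v := lexLe_antisymm hwv hvw
    apply hnomax j
    refine ⟨v, hvj, fun u hu => ?_⟩
    have h2 := (hsup j).1 _ ⟨u, hu, rfl⟩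
    rw [hwe] at h2
    exact listLe_iff.2 h2
  obtain ⟨i₀, hi₀⟩ := hone
  have hlow : omega0 ^ γ ≤ type (Subrel (List.Lex (· < ·)) L) := by
    rw [← hi₀]
    exact RelEmbedding.ordinal_type_le
      ⟨⟨fun u => ⟨u.1, hsub i₀ u.2⟩, fun u v h => Subtype.ext (congrArg (Subtype.val : ↥L → List α) h)⟩, Iff.rfl⟩
  have hup : type (Subrel (List.Lex (· < ·)) L) ≤ omega0 ^ γ := by
    apply type_le_of_typein_lt
    intro (v : ↥L)
    rw [← type_subrel]
    have hset : {y | Subrel (List.Lex (· < ·)) L y v} =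
        ⋃ i, {y : ↥L | y ∈ {x : ↥L | ↑x ∈ Ls i} ∧ Subrel (List.Lex (· < ·)) L y v} := by
      ext (y : ↥L)
      simp only [Set.mem_iUnion, Set.mem_setOf_eq]
      constructor
      · intro h
        have hy : (↑y : List α) ∈ ⋃ i, Ls i := by rw [← hL]; exact y.2
        obtain ⟨i, hi⟩ := Set.mem_iUnion.1 hy
        exact ⟨i, hi, h⟩
      · rintro ⟨i, _, h⟩; exact h
    change type (Subrel (Subrel (List.Lex (· < ·)) L) {y | Subrel (List.Lex (· < ·)) L y v}) < _
    rw [hset]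
    apply type_iUnion_lt _ (opow_pos γ omega0_pos) (nadd_lt_omega0_opow' γ)
    intro i
    obtain ⟨u, hu, huv⟩ := exists_gt i ↑v v.2
    have hu' : (⟨u, hsub i hu⟩ : ↥L) ∈ {x : ↥L | ↑x ∈ Ls i} := hu
    have hsubset : {y : ↥L | y ∈ {x : ↥L | ↑x ∈ Ls i} ∧ Subrel (List.Lex (· < ·)) L y v} ⊆
        {y : ↥L | y ∈ {x : ↥L | ↑x ∈ Ls i} ∧
          Subrel (List.Lex (· < ·)) L y (⟨u, hsub i hu⟩ : ↥L)} := by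
      rintro y ⟨h1, h2⟩
      exact ⟨h1, _root_.trans h2 huv⟩
    calc type (Subrel (Subrel (List.Lex (· < ·)) L)
            {y : ↥L | y ∈ {x : ↥L | ↑x ∈ Ls i} ∧ Subrel (List.Lex (· < ·)) L y v})
        ≤ type (Subrel (Subrel (List.Lex (· < ·)) L)
            {y : ↥L | y ∈ {x : ↥L | ↑x ∈ Ls i} ∧
              Subrel (List.Lex (· < ·)) L y (⟨u, hsub i hu⟩ : ↥L)}) :=
          type_subset_le _ hsubset
      _ = typein (Subrel (Subrel (List.Lex (· < ·)) L) {x : ↥L | ↑x ∈ Ls i})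
            ⟨⟨u, hsub i hu⟩, hu'⟩ :=
          type_inter_eq_typein _ {x : ↥L | ↑x ∈ Ls i} ⟨⟨u, hsub i hu⟩, hu'⟩
      _ < type (Subrel (Subrel (List.Lex (· < ·)) L) {x : ↥L | ↑x ∈ Ls i}) :=
          typein_lt_type _ _
      _ = @Ordinal.type _ _ (hwi i) := by
          refine RelIso.ordinal_type_eq
            { toFun := fun x => ⟨x.1.1, x.2⟩
              invFun := fun z => ⟨⟨z.1, hsub i z.2⟩, z.2⟩
              left_inv := fun x => rfl
              right_inv := fun z => rfl
              map_rel_iff' := Iff.rfl }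
      _ ≤ omega0 ^ γ := hle i
  exact le_antisymm hup hlow
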